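/- For all z₁, z₂ ∈ G: g_β(z₁) ≥ g_β(z₂) + (1/β) ⟪z₂ − prox_{βg}(z₂), z₁ − z₂⟫ + (1/(2β)) ‖(z₂ − prox_{βg}(z₂)) − (z₁ − prox_{βg}(z₁))‖². -/

import Mathlib

open RealInnerProductSpace

theorem stmt11
    (d : ℕ)
    (g : EuclideanSpace ℝ (Fin d) → ℝ)
    (hg_cvx : ConvexOn ℝ Set.univ g)
    (L : ℝ) (hL : 0 < L)
    (hg_lip : ∀ z₁ z₂, |g z₁ - g z₂| ≤ L * ‖z₁ - z₂‖)
    (β : ℝ) (hβ : 0 < β)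
    (gβ : EuclideanSpace ℝ (Fin d) → ℝ)
    (hgβ : ∀ z, gβ z = ⨅ y : EuclideanSpace ℝ (Fin d), (g y + ‖z - y‖ ^ 2 / (2 * β)))
    (prox : EuclideanSpace ℝ (Fin d) → EuclideanSpace ℝ (Fin d))
    (hprox : ∀ z y, g (prox z) + ‖z - prox z‖ ^ 2 / (2 * β) ≤ g y + ‖z - y‖ ^ 2 / (2 * β)) :
    ∀ z₁ z₂ : EuclideanSpace ℝ (Fin d),
      gβ z₁ ≥ gβ z₂ + (1 / β) * ⟪z₂ - prox z₂, z₁ - z₂⟫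
        + (1 / (2 * β)) * ‖(z₂ - prox z₂) - (z₁ - prox z₁)‖ ^ 2 := by
  have hβ2 : (0:ℝ) < 2 * β := by positivity
  have hmin : ∀ z, gβ z = g (prox z) + ‖z - prox z‖ ^ 2 / (2 * β) := by
    intro z
    rw [hgβ]
    refine le_antisymm (ciInf_le ⟨g (prox z) + ‖z - prox z‖ ^ 2 / (2 * β), ?_⟩ (prox z))
      (le_ciInf (hprox z))
    rintro x ⟨y, rfl⟩
    exact hprox z y
  intro z₁ z₂
  set p₁ := prox z₁ with hp₁
  set p₂ := prox z₂ with hp₂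
  set J := ⟪z₂ - p₂, p₁ - p₂⟫ with hJ
  set V := ‖p₁ - p₂‖ ^ 2 with hV
  have step : ∀ t : ℝ, 0 < t → t ≤ 1 →
      g p₂ + (1 / β) * J - t * V / (2 * β) ≤ g p₁ := by
    intro t ht ht1
    have hconv := hg_cvx.2 (Set.mem_univ p₂) (Set.mem_univ p₁)
      (by linarith : (0:ℝ) ≤ 1 - t) ht.le (by ring)
    have hpt := hprox z₂ ((1 - t) • p₂ + t • p₁)
    have h1 : z₂ - ((1 - t) • p₂ + t • p₁) = (z₂ - p₂) - t • (p₁ - p₂) := by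
      module
    have hnorm : ‖z₂ - ((1 - t) • p₂ + t • p₁)‖ ^ 2
        = ‖z₂ - p₂‖ ^ 2 - 2 * t * J + t ^ 2 * V := by
      rw [h1, @norm_sub_sq_real, real_inner_smul_right, norm_smul, Real.norm_eq_abs,
        mul_pow, sq_abs, hJ, hV]
      ring
    rw [hnorm, hp₂] at hpt
    simp only [smul_eq_mul] at hconv
    have hconv' := mul_le_mul_of_nonneg_right hconv hβ2.le
    have hpt' := mul_le_mul_of_nonneg_right hpt hβ2.le
    rw [add_mul, add_mul, div_mul_cancel₀ _ hβ2.ne', div_mul_cancel₀ _ hβ2.ne'] at hpt'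
    have h4 : t * (g p₂ * (2 * β) + 2 * J - t * V) ≤ t * (g p₁ * (2 * β)) := by
      nlinarith [hpt', hconv']
    have h5 : g p₂ * (2 * β) + 2 * J - t * V ≤ g p₁ * (2 * β) :=
      le_of_mul_le_mul_left h4 ht
    have h7 : g p₂ + (1 / β) * J - t * V / (2 * β)
        = (g p₂ * (2 * β) + 2 * J - t * V) / (2 * β) := by
      field_simp
    rw [h7, div_le_iff₀ hβ2]
    linarith
  have key : g p₂ + (1 / β) * J ≤ g p₁ := by
    refine le_of_forall_pos_le_add ?_
    intro ε hε
    by_cases hv : V = 0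
    · have h := step 1 one_pos le_rfl
      rw [hv] at h
      simp only [one_mul, zero_div, sub_zero] at h
      linarith
    · have hv' : 0 < V := lt_of_le_of_ne (by rw [hV]; positivity) (Ne.symm hv)
      set t := min 1 (2 * β * ε / V) with htdef
      have ht : 0 < t := lt_min one_pos (by positivity)
      have ht1 : t ≤ 1 := min_le_left _ _
      have h := step t ht ht1
      have htV : t * V / (2 * β) ≤ ε := by
        have h2 : t ≤ 2 * β * ε / V := min_le_right _ _
        rw [div_le_iff₀ hβ2]
        calc t * V ≤ (2 * β * ε / V) * V := mul_le_mul_of_nonneg_right h2 hv'.le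
          _ = ε * (2 * β) := by field_simp
      linarith
  rw [hmin z₁, hmin z₂, ← hp₁, ← hp₂]
  have e2 : ⟪z₂ - p₂, z₁ - z₂⟫ = ⟪z₂ - p₂, z₁ - p₁⟫ - ‖z₂ - p₂‖ ^ 2 + J := by
    have h : z₁ - z₂ = ((z₁ - p₁) - (z₂ - p₂)) + (p₁ - p₂) := by abel
    rw [h, inner_add_right, inner_sub_right, real_inner_self_eq_norm_sq, hJ]
  have e1 : ‖(z₂ - p₂) - (z₁ - p₁)‖ ^ 2
      = ‖z₂ - p₂‖ ^ 2 - 2 * ⟪z₂ - p₂, z₁ - p₁⟫ + ‖z₁ - p₁‖ ^ 2 := by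
    rw [@norm_sub_sq_real]
  have hid : (1 / β) * ⟪z₂ - p₂, z₁ - z₂⟫ + (1 / (2 * β)) * ‖(z₂ - p₂) - (z₁ - p₁)‖ ^ 2
      = (1 / β) * J + ‖z₁ - p₁‖ ^ 2 / (2 * β) - ‖z₂ - p₂‖ ^ 2 / (2 * β) := by
    rw [e1, e2]
    field_simp
    ring
  linarith
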